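/- For Ψ(k,x) = x^k I_N on ℤ × (0,∞), the left Fourier algebra is F_k(Ψ) = M_N(ℝ)[k, S_k^{±1}], the right Fourier algebra is F_x(Ψ) = M_N(ℝ)[∂_x, x^{±1}] (opposite algebra), and the generalized Fourier map is determined by b_Ψ(k) = ∂_x x, b_Ψ(S_k) = x, b_Ψ(A) = A for A ∈ M_N(ℝ). In particular dim_ℝ F_k^{2ℓ,2m}(Ψ) = (2ℓ+1)(2m+1)N². -/

import Mathlib

open Matrix

/-- The right action of `∂_x x` on scalar functions: `g ↦ g'(x)·x`. -/
noncomputable def rAct : (ℝ → ℝ) → (ℝ → ℝ) := fun g x => deriv g x * x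


-- L1 : iterated derivative of zpow
lemma iterDeriv_zpow (k : ℤ) (n : ℕ) : ∀ x : ℝ, 0 < x →
    iteratedDeriv n (fun y : ℝ => y ^ k) x
      = (∏ t ∈ Finset.range n, ((k : ℝ) - t)) * x ^ (k - n) := by
  induction n with
  | zero => intro x hx; simp
  | succ n ih =>
    intro x hx
    rw [iteratedDeriv_succ]
    have hev : iteratedDeriv n (fun y : ℝ => y ^ k)
        =ᶠ[nhds x] fun y => (∏ t ∈ Finset.range n, ((k : ℝ) - t)) * y ^ (k - n) := by
      filter_upwards [IsOpen.mem_nhds isOpen_Ioi (Set.mem_Ioi.2 hx)] with y hy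
      exact ih y hy
    rw [hev.deriv_eq]
    rw [deriv_const_mul _ ((differentiableAt_zpow.2 (Or.inl hx.ne')))]
    rw [deriv_zpow]
    rw [Finset.prod_range_succ]
    push_cast
    rw [mul_assoc, show k - (n:ℤ) - 1 = k - ((n:ℤ)+1) by ring]

-- general linear solve lemma
lemma solve_lin {r : ℕ} {V : Type*} [AddCommGroup V] [Module ℝ V]
    (M : Matrix (Fin r) (Fin r) ℝ) (hM : IsUnit M.det)
    (u G : Fin r → V) (h : ∀ t, ∑ j, M t j • u j = G t) :
    ∀ j, u j = ∑ t, M⁻¹ j t • G t := by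
  intro j
  have h1 : M⁻¹ * M = 1 := Matrix.nonsing_inv_mul M hM
  calc u j = ∑ i, ((M⁻¹ * M) j i) • u i := by
        rw [h1]
        simp [Matrix.one_apply, Finset.sum_ite_eq, Finset.mem_univ]
    _ = ∑ t, M⁻¹ j t • G t := by
        simp only [Matrix.mul_apply, Finset.sum_smul, ← h, Finset.smul_sum, smul_smul]
        rw [Finset.sum_comm]

-- Stirling-like coefficients
noncomputable def stir : ℕ → ℕ → ℝ
  | 0, 0 => 1
  | 0, _ + 1 => 0
  | _ + 1, 0 => 0
  | j + 1, p + 1 => stir j p + (p + 1) * stir j (p + 1)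

lemma stir_zero (j p : ℕ) (h : j < p) : stir j p = 0 := by
  induction j generalizing p with
  | zero => match p, h with
    | p + 1, _ => rfl
  | succ j ih => match p, h with
    | p + 1, h =>
      show stir j p + (p + 1) * stir j (p + 1) = 0
      rw [ih p (by omega), ih (p+1) (by omega)]
      ring

def descf (k : ℤ) (p : ℕ) : ℝ := ∏ t ∈ Finset.range p, ((k : ℝ) - t)

lemma pow_eq_sum_stir (j : ℕ) (k : ℤ) :
    (k : ℝ) ^ j = ∑ p ∈ Finset.range (j + 1), stir j p * descf k p := by
  induction j with
  | zero => simp [descf, stir]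
  | succ j ih =>
    have key : ∀ p : ℕ, (k : ℝ) * descf k p = descf k (p + 1) + p * descf k p := by
      intro p
      simp only [descf]
      rw [Finset.prod_range_succ]
      ring
    calc (k : ℝ) ^ (j + 1) = (k:ℝ) * ∑ p ∈ Finset.range (j + 1), stir j p * descf k p := by
          rw [← ih]; ring
      _ = ∑ p ∈ Finset.range (j + 1), (stir j p * descf k (p+1) + stir j p * (p * descf k p)) := by
          rw [Finset.mul_sum]
          refine Finset.sum_congr rfl fun p _ => ?_
          rw [show (k:ℝ) * (stir j p * descf k p) = stir j p * ((k:ℝ) * descf k p) by ring, key]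
          ring
      _ = ∑ p ∈ Finset.range (j + 2), stir (j+1) p * descf k p := by
          rw [Finset.sum_add_distrib]
          rw [Finset.sum_range_succ' (fun p => stir (j+1) p * descf k p) (j+1)]
          have h2 : ∀ p : ℕ, stir (j+1) (p+1) = stir j p + ((p:ℝ)+1) * stir j (p+1) :=
            fun p => rfl
          have h3 : stir (j+1) 0 = 0 := rfl
          rw [h3, zero_mul, add_zero]
          have h5 : ∀ p ∈ Finset.range (j+1), stir (j+1) (p+1) * descf k (p+1)
              = stir j p * descf k (p+1) + stir j (p+1) * ((((p:ℝ))+1) * descf k (p+1)) := by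
            intro p _; rw [h2]; ring
          rw [Finset.sum_congr rfl h5, Finset.sum_add_distrib]
          congr 1
          rw [Finset.sum_range_succ' (fun p => stir j p * ((p:ℝ) * descf k p)) j]
          rw [Finset.sum_range_succ (fun p => stir j (p+1) * ((((p:ℝ))+1) * descf k (p+1))) j]
          rw [stir_zero j (j+1) (by omega)]
          simp only [Nat.cast_zero, zero_mul, mul_zero, add_zero]
          refine Finset.sum_congr rfl fun p _ => ?_
          push_cast
          ring

lemma pow_eq_sum_stir' (j d : ℕ) (hjd : j ≤ d) (k : ℤ) :
    (k : ℝ) ^ j = ∑ p ∈ Finset.range (d + 1), stir j p * descf k p := by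
  rw [pow_eq_sum_stir j k]
  refine Finset.sum_subset (Finset.range_subset_range.2 (by omega)) fun p _ hp => ?_
  rw [stir_zero j p (by simp at hp ⊢; omega), zero_mul]

section PD
variable {N : ℕ}

/-- `f : ℤ → Mat` is entrywise a polynomial of degree ≤ d in `k`. -/
def PD (N d : ℕ) (f : ℤ → Matrix (Fin N) (Fin N) ℝ) : Prop :=
  ∃ A : ℕ → Matrix (Fin N) (Fin N) ℝ,
    ∀ k : ℤ, f k = ∑ j ∈ Finset.range (d + 1), (k : ℝ) ^ j • A j

lemma PD_add {d : ℕ} {f g : ℤ → Matrix (Fin N) (Fin N) ℝ} (hf : PD N d f) (hg : PD N d g) :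
    PD N d (fun k => f k + g k) := by
  obtain ⟨A, hA⟩ := hf; obtain ⟨B, hB⟩ := hg
  exact ⟨fun j => A j + B j, fun k => by
    simp [hA, hB, smul_add, Finset.sum_add_distrib]⟩

lemma PD_smul {d : ℕ} {f : ℤ → Matrix (Fin N) (Fin N) ℝ} (r : ℝ) (hf : PD N d f) :
    PD N d (fun k => r • f k) := by
  obtain ⟨A, hA⟩ := hf
  exact ⟨fun j => r • A j, fun k => by
    simp [hA, Finset.smul_sum, smul_smul, mul_comm]⟩

lemma PD_sum {d : ℕ} {ι : Type*} (s : Finset ι) (F : ι → ℤ → Matrix (Fin N) (Fin N) ℝ)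
    (h : ∀ t ∈ s, PD N d (F t)) : PD N d (fun k => ∑ t ∈ s, F t k) := by
  classical
  induction s using Finset.induction with
  | empty => exact ⟨fun _ => 0, by simp⟩
  | @insert a s' hx ih =>
    simp only [Finset.sum_insert hx]
    exact PD_add (h a (Finset.mem_insert_self a s'))
      (ih fun t ht => h t (Finset.mem_insert_of_mem ht))

lemma PD_desc {d p : ℕ} (hp : p ≤ d) (C : Matrix (Fin N) (Fin N) ℝ) :
    PD N d (fun k => descf k p • C) := by
  classical
  set q : Polynomial ℝ := ∏ t ∈ Finset.range p, (Polynomial.X - Polynomial.C (t : ℝ)) with hq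
  have hdeg : q.natDegree ≤ p := by
    have h1 : ∀ t ∈ Finset.range p, (Polynomial.X - Polynomial.C ((t:ℕ) : ℝ)).natDegree ≤ 1 :=
      fun t _ => le_of_eq (Polynomial.natDegree_X_sub_C _)
    refine le_trans (Polynomial.natDegree_prod_le _ _)
      (le_trans (Finset.sum_le_card_nsmul _ _ 1 h1) (by simp))
  have heval : ∀ k : ℤ, q.eval (k : ℝ) = descf k p := by
    intro k
    simp [hq, descf, Polynomial.eval_prod]
  refine ⟨fun j => q.coeff j • C, fun k => ?_⟩
  show descf k p • C = _
  rw [← heval k, Polynomial.eval_eq_sum_range' (show q.natDegree < d + 1 by omega) (k : ℝ)]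
  rw [Finset.sum_smul]
  exact Finset.sum_congr rfl fun i _ => by rw [smul_smul, mul_comm]

end PD

section Core
variable {N : ℕ}
local notation "Mat" => Matrix (Fin N) (Fin N) ℝ

lemma Icc_eq_map (B : ℕ) :
    Finset.Icc (-(B:ℤ)) B = (Finset.range (2*B+1)).map
      ⟨fun j : ℕ => (j:ℤ) - B, fun a b h => by
        have h' : (a:ℤ) - B = (b:ℤ) - B := h
        omega⟩ := by
  ext n
  simp only [Finset.mem_Icc, Finset.mem_map, Finset.mem_range, Function.Embedding.coeFn_mk]
  constructor
  · intro h; exact ⟨(n + B).toNat, by omega, by show (((n + B).toNat : ℕ) : ℤ) - B = n; omega⟩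
  · rintro ⟨j, hj, rfl⟩; change -(B:ℤ) ≤ (j:ℤ) - B ∧ (j:ℤ) - B ≤ B; omega

lemma sum_Icc_eq_sum_fin {V : Type*} [AddCommMonoid V] (B : ℕ) (g : ℤ → V) :
    ∑ n ∈ Finset.Icc (-(B:ℤ)) B, g n = ∑ j : Fin (2*B+1), g ((j:ℤ) - B) := by
  rw [Icc_eq_map B, Finset.sum_map, Fin.sum_univ_eq_sum_range (fun j => g ((j:ℤ) - B))]
  rfl

lemma finsum_band (B : ℕ) (c : ℤ → ℤ → Mat) (h : ∀ n : ℤ, (B:ℤ) < |n| → c n = 0)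
    (k : ℤ) (x : ℝ) :
    (∑ᶠ n : ℤ, x ^ (k + n) • c n k) = ∑ n ∈ Finset.Icc (-(B:ℤ)) B, x ^ (k + n) • c n k := by
  refine finsum_eq_sum_of_support_subset _ fun n hn => ?_
  simp only [Function.mem_support] at hn
  simp only [Finset.coe_Icc, Set.mem_Icc]
  by_contra hcon
  push_neg at hcon
  have : (B:ℤ) < |n| := by
    rcases le_or_gt (-(B:ℤ)) n with h1 | h1
    · have := hcon h1; rw [abs_of_pos (by omega)]; omega
    · rw [abs_of_neg (by omega)]; omega
  exact hn (by rw [h n this]; simp)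

/-- rewrite the differential side using the explicit iterated derivatives -/
lemma diff_side (M : ℕ) (b : ℕ → ℝ → Mat) (k : ℤ) (x : ℝ) (hx : 0 < x) :
    ∑ n ∈ Finset.range (M + 1), iteratedDeriv n (fun y : ℝ => y ^ k) x • b n x
      = ∑ n ∈ Finset.range (M + 1), (descf k n * x ^ (k - (n:ℤ))) • b n x :=
  Finset.sum_congr rfl fun n _ => by rw [iterDeriv_zpow k n x hx]; rfl

end Core

section Construct
variable {N : ℕ}
local notation "Mat" => Matrix (Fin N) (Fin N) ℝ

lemma construct (Bd d : ℕ) (A : ℤ → ℕ → Mat)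
    (c : ℤ → ℤ → Mat)
    (hc : ∀ n k, c n k = ∑ j ∈ Finset.range (d+1), (k:ℝ)^j • A n j) :
    ∃ b : ℕ → ℝ → Mat, ∀ (k : ℤ) (x : ℝ), 0 < x →
      ∑ n ∈ Finset.Icc (-(Bd:ℤ)) Bd, x^(k+n) • c n k
        = ∑ p ∈ Finset.range (d+1), (descf k p * x ^ (k - (p:ℤ))) • b p x := by
  refine ⟨fun p x => ∑ n ∈ Finset.Icc (-(Bd:ℤ)) Bd, ∑ j ∈ Finset.range (d+1),
      (stir j p * x^((p:ℤ)+n)) • A n j, fun k x hx => ?_⟩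
  have hxne : x ≠ 0 := ne_of_gt hx
  have scalar : ∀ (n : ℤ) (j : ℕ), j ∈ Finset.range (d+1) →
      x^(k+n) * (k:ℝ)^j
        = ∑ p ∈ Finset.range (d+1),
            (descf k p * x^(k-(p:ℤ))) * (stir j p * x^((p:ℤ)+n)) := by
    intro n j hj
    simp only [Finset.mem_range] at hj
    have hz : ∀ p : ℕ, x^(k-(p:ℤ)) * x^((p:ℤ)+n) = x^(k+n) := by
      intro p
      rw [← zpow_add₀ hxne]
      congr 1
      ring
    have hterm : ∀ p ∈ Finset.range (d+1),
        (descf k p * x^(k-(p:ℤ))) * (stir j p * x^((p:ℤ)+n))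
          = stir j p * descf k p * x^(k+n) := by
      intro p _
      calc (descf k p * x^(k-(p:ℤ))) * (stir j p * x^((p:ℤ)+n))
          = stir j p * descf k p * (x^(k-(p:ℤ)) * x^((p:ℤ)+n)) := by ring
        _ = stir j p * descf k p * x^(k+n) := by rw [hz]
    rw [Finset.sum_congr rfl hterm, ← Finset.sum_mul, ← pow_eq_sum_stir' j d (by omega)]
    exact mul_comm _ _
  calc ∑ n ∈ Finset.Icc (-(Bd:ℤ)) Bd, x^(k+n) • c n k
      = ∑ n ∈ Finset.Icc (-(Bd:ℤ)) Bd, ∑ j ∈ Finset.range (d+1),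
          (x^(k+n) * (k:ℝ)^j) • A n j := by
        refine Finset.sum_congr rfl fun n _ => ?_
        rw [hc, Finset.smul_sum]
        exact Finset.sum_congr rfl fun j _ => by rw [smul_smul]
    _ = ∑ n ∈ Finset.Icc (-(Bd:ℤ)) Bd, ∑ j ∈ Finset.range (d+1),
          ∑ p ∈ Finset.range (d+1),
            ((descf k p * x^(k-(p:ℤ))) * (stir j p * x^((p:ℤ)+n))) • A n j := by
        refine Finset.sum_congr rfl fun n _ => Finset.sum_congr rfl fun j hj => ?_
        rw [scalar n j hj, Finset.sum_smul]
    _ = ∑ p ∈ Finset.range (d+1), ∑ n ∈ Finset.Icc (-(Bd:ℤ)) Bd,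
          ∑ j ∈ Finset.range (d+1),
            ((descf k p * x^(k-(p:ℤ))) * (stir j p * x^((p:ℤ)+n))) • A n j := by
        have h1 : ∑ n ∈ Finset.Icc (-(Bd:ℤ)) Bd, ∑ j ∈ Finset.range (d+1),
            ∑ p ∈ Finset.range (d+1),
              ((descf k p * x^(k-(p:ℤ))) * (stir j p * x^((p:ℤ)+n))) • A n j
            = ∑ n ∈ Finset.Icc (-(Bd:ℤ)) Bd, ∑ p ∈ Finset.range (d+1),
            ∑ j ∈ Finset.range (d+1),
              ((descf k p * x^(k-(p:ℤ))) * (stir j p * x^((p:ℤ)+n))) • A n j :=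
          Finset.sum_congr rfl fun n _ => Finset.sum_comm
        rw [h1]
        exact Finset.sum_comm
    _ = ∑ p ∈ Finset.range (d+1), (descf k p * x ^ (k - (p:ℤ))) •
          ∑ n ∈ Finset.Icc (-(Bd:ℤ)) Bd, ∑ j ∈ Finset.range (d+1),
            (stir j p * x^((p:ℤ)+n)) • A n j := by
        refine Finset.sum_congr rfl fun p _ => ?_
        rw [Finset.smul_sum]
        refine Finset.sum_congr rfl fun n _ => ?_
        rw [Finset.smul_sum]
        exact Finset.sum_congr rfl fun j _ => by rw [smul_smul]

end Construct

section Forward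
variable {N : ℕ}
local notation "Mat" => Matrix (Fin N) (Fin N) ℝ

lemma vand_unit (r : ℕ) :
    IsUnit (Matrix.vandermonde (fun t : Fin r => ((t:ℕ) : ℝ) + 1)).det := by
  rw [Matrix.det_vandermonde]
  rw [isUnit_iff_ne_zero]
  refine Finset.prod_ne_zero_iff.2 fun i _ => Finset.prod_ne_zero_iff.2 fun j hj => ?_
  simp only [Finset.mem_Ioi] at hj
  have : (i:ℕ) < (j:ℕ) := hj
  have : ((i:ℕ):ℝ) < ((j:ℕ):ℝ) := by exact_mod_cast this
  intro hcon
  nlinarith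

lemma forward_core (Bd M : ℕ) (c : ℤ → ℤ → Mat) (b : ℕ → ℝ → Mat)
    (hband : ∀ n : ℤ, (Bd:ℤ) < |n| → c n = 0)
    (heq : ∀ (k : ℤ) (x : ℝ), 0 < x →
      ∑ n ∈ Finset.Icc (-(Bd:ℤ)) Bd, x^(k+n) • c n k
        = ∑ p ∈ Finset.range (M+1), (descf k p * x ^ (k - (p:ℤ))) • b p x) :
    ∃ A : ℤ → ℕ → Mat, (∀ n : ℤ, (Bd:ℤ) < |n| → ∀ j, A n j = 0) ∧
      ∀ (n k : ℤ), c n k = ∑ j ∈ Finset.range (M + 1), (k:ℝ) ^ j • A n j := by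
  classical
  set r := 2 * Bd + 1 with hr
  set v : Fin r → ℝ := fun t => ((t:ℕ) : ℝ) + 1 with hv
  have hvpos : ∀ t, 0 < v t := fun t => by positivity
  set V := Matrix.vandermonde v with hV
  -- the linear system at each k
  have hsys : ∀ (k : ℤ) (t : Fin r),
      ∑ jj : Fin r, V t jj • c ((jj:ℤ) - Bd) k
        = ∑ p ∈ Finset.range (M+1), (descf k p * (v t) ^ ((Bd:ℤ) - (p:ℤ))) • b p (v t) := by
    intro k t
    have h0 := heq k (v t) (hvpos t)
    have h1 := congrArg (fun z => ((v t) ^ ((Bd:ℤ) - k)) • z) h0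
    simp only [Finset.smul_sum] at h1
    have hne : v t ≠ 0 := ne_of_gt (hvpos t)
    calc ∑ jj : Fin r, V t jj • c ((jj:ℤ) - Bd) k
        = ∑ n ∈ Finset.Icc (-(Bd:ℤ)) Bd, ((v t) ^ ((Bd:ℤ) - k)) • ((v t)^(k+n) • c n k) := by
          rw [sum_Icc_eq_sum_fin Bd (fun n => ((v t) ^ ((Bd:ℤ) - k)) • ((v t)^(k+n) • c n k))]
          refine Finset.sum_congr rfl fun jj _ => ?_
          rw [smul_smul, ← zpow_add₀ hne]
          have he : (Bd:ℤ) - k + (k + ((jj:ℤ) - Bd)) = (jj:ℕ) := by push_cast; ring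
          rw [he, zpow_natCast]
          rfl
      _ = ((v t) ^ ((Bd:ℤ) - k)) • ∑ p ∈ Finset.range (M+1),
            (descf k p * (v t) ^ (k - (p:ℤ))) • b p (v t) := by
          rw [← Finset.smul_sum, h0]
      _ = ∑ p ∈ Finset.range (M+1), (descf k p * (v t) ^ ((Bd:ℤ) - (p:ℤ))) • b p (v t) := by
          rw [Finset.smul_sum]
          refine Finset.sum_congr rfl fun p _ => ?_
          rw [smul_smul]
          congr 1
          rw [show (v t) ^ ((Bd:ℤ) - k) * (descf k p * (v t) ^ (k - (p:ℤ)))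
              = descf k p * ((v t) ^ ((Bd:ℤ) - k) * (v t) ^ (k - (p:ℤ))) by ring,
            ← zpow_add₀ hne]
          congr 2
          ring
  -- solve the system
  have hsolve : ∀ (k : ℤ) (jj : Fin r),
      c ((jj:ℤ) - Bd) k = ∑ t : Fin r, (V⁻¹ jj t) •
        (∑ p ∈ Finset.range (M+1), (descf k p * (v t) ^ ((Bd:ℤ) - (p:ℤ))) • b p (v t)) :=
    fun k => solve_lin V (vand_unit r) _ _ (hsys k)
  -- each c n is a polynomial of degree ≤ M
  have hPD : ∀ n : ℤ, n ∈ Finset.Icc (-(Bd:ℤ)) Bd → PD N M (c n) := by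
    intro n hn
    simp only [Finset.mem_Icc] at hn
    have hjj : ((n + Bd).toNat) < r := by omega
    set jj : Fin r := ⟨(n + Bd).toNat, hjj⟩ with hjjdef
    have hnn : ((jj:ℤ)) - Bd = n := by simp [hjjdef]; omega
    have : PD N M (fun k => ∑ t : Fin r, (V⁻¹ jj t) •
        (∑ p ∈ Finset.range (M+1), (descf k p * (v t) ^ ((Bd:ℤ) - (p:ℤ))) • b p (v t))) := by
      refine PD_sum Finset.univ _ fun t _ => PD_smul _ ?_
      have : ∀ k : ℤ, (∑ p ∈ Finset.range (M+1),
          (descf k p * (v t) ^ ((Bd:ℤ) - (p:ℤ))) • b p (v t))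
          = ∑ p ∈ Finset.range (M+1), descf k p • (((v t) ^ ((Bd:ℤ) - (p:ℤ))) • b p (v t)) :=
        fun k => Finset.sum_congr rfl fun p _ => by rw [smul_smul]
      simp only [this]
      exact PD_sum _ _ fun p hp => PD_desc (by simp at hp; omega) _
    have hfun : c n = fun k => ∑ t : Fin r, (V⁻¹ jj t) •
        (∑ p ∈ Finset.range (M+1), (descf k p * (v t) ^ ((Bd:ℤ) - (p:ℤ))) • b p (v t)) := by
      funext k
      rw [← hnn]
      exact hsolve k jj
    rw [hfun]
    exact this
  -- assemble A
  have hPDall : ∀ n : ℤ, ¬ ((Bd:ℤ) < |n|) → PD N M (c n) := by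
    intro n hn
    exact hPD n (by simp only [Finset.mem_Icc]; rcases abs_le.1 (not_lt.1 hn) with ⟨h1, h2⟩; omega)
  refine ⟨fun n j => if h : (Bd:ℤ) < |n| then 0 else (hPDall n h).choose j, fun n hn j => by
    simp [hn], fun n k => ?_⟩
  by_cases h : (Bd:ℤ) < |n|
  · simp only [dif_pos h]
    rw [hband n h]
    simp
  · simp only [dif_neg h]
    exact ((hPDall n h).choose_spec k)

end Forward

section Part2
variable {N : ℕ}
local notation "Mat" => Matrix (Fin N) (Fin N) ℝ

lemma descf_nat_zero {kk p : ℕ} (h : kk < p) : descf (kk:ℤ) p = 0 := by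
  refine Finset.prod_eq_zero (Finset.mem_range.2 h) ?_
  push_cast; ring

noncomputable def descMat (M : ℕ) : Matrix (Fin (M+1)) (Fin (M+1)) ℝ :=
  fun t p => descf ((t:ℕ) : ℤ) (p:ℕ)

lemma descMat_unit (M : ℕ) : IsUnit (descMat M).det := by
  have htri : (descMat M).BlockTriangular OrderDual.toDual := by
    intro i j hij
    exact descf_nat_zero (OrderDual.toDual_lt_toDual.mp hij)
  rw [Matrix.det_of_lowerTriangular _ htri, isUnit_iff_ne_zero]
  refine Finset.prod_ne_zero_iff.2 fun p _ => ne_of_gt ?_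
  show (0:ℝ) < ∏ t ∈ Finset.range (p:ℕ), ((((p:ℕ):ℤ):ℝ) - (t:ℕ))
  refine Finset.prod_pos fun t ht => ?_
  simp only [Finset.mem_range] at ht
  have h1 : ((t:ℕ):ℝ) < (((p:ℕ):ℤ):ℝ) := by push_cast; exact_mod_cast ht
  linarith

lemma part2_forward (B M : ℕ) (c : ℤ → ℤ → Mat) (b : ℕ → ℝ → Mat)
    (hband : ∀ n : ℤ, (B:ℤ) < |n| → c n = 0)
    (hb : ∀ n, M < n → b n = 0)
    (heq : ∀ (k : ℤ) (x : ℝ), 0 < x →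
      ∑ n ∈ Finset.Icc (-(B:ℤ)) B, x^(k+n) • c n k
        = ∑ p ∈ Finset.range (M+1), (descf k p * x ^ (k - (p:ℤ))) • b p x) :
    ∃ A : ℕ → ℤ → Mat, ∀ (n : ℕ) (x : ℝ), 0 < x →
      b n x = ∑ i ∈ Finset.Icc (-((B+M:ℕ):ℤ)) ((B+M:ℕ):ℤ), x^i • A n i := by
  classical
  set D := descMat M with hD
  refine ⟨fun p i => if hp : p < M + 1 then
      ∑ t : Fin (M+1), (D⁻¹ ⟨p, hp⟩ t) • c (i - p) ((t:ℕ):ℤ) else 0, fun p x hx => ?_⟩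
  have hxne : x ≠ 0 := ne_of_gt hx
  by_cases hp : p < M + 1
  swap
  · rw [hb p (by omega)]
    simp only [dif_neg hp]
    simp
  -- the linear system at this x
  have hsys : ∀ t : Fin (M+1),
      ∑ q : Fin (M+1), D t q • (x ^ (-((q:ℕ):ℤ)) • b (q:ℕ) x)
        = ∑ n ∈ Finset.Icc (-(B:ℤ)) B, x ^ (n:ℤ) • c n ((t:ℕ):ℤ) := by
    intro t
    have h0 := heq ((t:ℕ):ℤ) x hx
    have h1 := congrArg (fun z => (x ^ (-((t:ℕ):ℤ))) • z) h0
    simp only [Finset.smul_sum, smul_smul] at h1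
    calc ∑ q : Fin (M+1), D t q • (x ^ (-((q:ℕ):ℤ)) • b (q:ℕ) x)
        = ∑ q ∈ Finset.range (M+1), (x ^ (-((t:ℕ):ℤ)) * (descf ((t:ℕ):ℤ) q * x ^ (((t:ℕ):ℤ) - (q:ℤ)))) • b q x := by
          rw [← Fin.sum_univ_eq_sum_range (fun q => (x ^ (-((t:ℕ):ℤ)) * (descf ((t:ℕ):ℤ) q * x ^ (((t:ℕ):ℤ) - (q:ℤ)))) • b q x) (M+1)]
          refine Finset.sum_congr rfl fun q _ => ?_
          rw [smul_smul]
          congr 1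
          show descf ((t:ℕ):ℤ) (q:ℕ) * x ^ (-((q:ℕ):ℤ)) = _
          rw [show x ^ (-((t:ℕ):ℤ)) * (descf ((t:ℕ):ℤ) (q:ℕ) * x ^ (((t:ℕ):ℤ) - ((q:ℕ):ℤ)))
              = descf ((t:ℕ):ℤ) (q:ℕ) * (x ^ (-((t:ℕ):ℤ)) * x ^ (((t:ℕ):ℤ) - ((q:ℕ):ℤ))) by ring,
            ← zpow_add₀ hxne]
          congr 2
          ring
      _ = ∑ n ∈ Finset.Icc (-(B:ℤ)) B, x ^ (n:ℤ) • c n ((t:ℕ):ℤ) := by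
          rw [← h1]
          refine Finset.sum_congr rfl fun n _ => ?_
          congr 1
          rw [← zpow_add₀ hxne]
          congr 1
          ring
  have hsolve := solve_lin D (descMat_unit M) _ _ hsys
  have hbp := hsolve ⟨p, hp⟩
  -- b p x = x^p • u p
  have hbpx : b p x = x ^ ((p:ℕ):ℤ) •
      ∑ t : Fin (M+1), D⁻¹ ⟨p, hp⟩ t • ∑ n ∈ Finset.Icc (-(B:ℤ)) B, x ^ (n:ℤ) • c n ((t:ℕ):ℤ) := by
    rw [← hbp]
    show b p x = x ^ ((p:ℕ):ℤ) • x ^ (-((p:ℕ):ℤ)) • b p x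
    rw [smul_smul, ← zpow_add₀ hxne]
    simp
  rw [hbpx, Finset.smul_sum]
  simp only [dif_pos hp]
  have hclaim : ∀ tt : ℤ,
      ∑ i ∈ Finset.Icc (-((B+M:ℕ):ℤ)) ((B+M:ℕ):ℤ), x^i • c (i - (p:ℕ)) tt
        = ∑ n ∈ Finset.Icc (-(B:ℤ)) B, x^(((p:ℕ):ℤ)+n) • c n tt := by
    intro tt
    have hsub : Finset.Icc (((p:ℕ):ℤ) + -(B:ℤ)) (((p:ℕ):ℤ) + (B:ℤ))
        ⊆ Finset.Icc (-((B+M:ℕ):ℤ)) ((B+M:ℕ):ℤ) := by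
      apply Finset.Icc_subset_Icc <;> push_cast <;> omega
    rw [← Finset.sum_subset hsub (fun i hi hni => ?_)]
    · rw [← Finset.map_add_left_Icc, Finset.sum_map]
      refine Finset.sum_congr rfl fun n _ => ?_
      simp only [addLeftEmbedding, Function.Embedding.coeFn_mk]
      have hnp : ((p:ℕ):ℤ) + n - ((p:ℕ):ℤ) = n := by ring
      rw [hnp]
    · have hib : (B:ℤ) < |i - (p:ℕ)| := by
        simp only [Finset.mem_Icc] at hi hni
        push_cast at hi hni
        rcases le_or_gt 0 (i - ((p:ℕ):ℤ)) with h | h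
        · rw [abs_of_nonneg h]; omega
        · rw [abs_of_neg h]; omega
      rw [hband _ hib]
      simp
  calc ∑ t : Fin (M+1), x ^ ((p:ℕ):ℤ) •
          (D⁻¹ ⟨p, hp⟩ t • ∑ n ∈ Finset.Icc (-(B:ℤ)) B, x ^ (n:ℤ) • c n ((t:ℕ):ℤ))
      = ∑ t : Fin (M+1), D⁻¹ ⟨p, hp⟩ t •
          ∑ n ∈ Finset.Icc (-(B:ℤ)) B, x ^ (((p:ℕ):ℤ)+n) • c n ((t:ℕ):ℤ) := by
        refine Finset.sum_congr rfl fun t _ => ?_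
        rw [smul_comm, Finset.smul_sum]
        congr 1
        refine Finset.sum_congr rfl fun n _ => ?_
        rw [smul_smul, ← zpow_add₀ hxne]
    _ = ∑ t : Fin (M+1), D⁻¹ ⟨p, hp⟩ t •
          ∑ i ∈ Finset.Icc (-((B+M:ℕ):ℤ)) ((B+M:ℕ):ℤ), x^i • c (i - (p:ℕ)) ((t:ℕ):ℤ) := by
        refine Finset.sum_congr rfl fun t _ => ?_
        rw [hclaim]
    _ = ∑ i ∈ Finset.Icc (-((B+M:ℕ):ℤ)) ((B+M:ℕ):ℤ), x^i •
          ∑ t : Fin (M+1), D⁻¹ ⟨p, hp⟩ t • c (i - (p:ℕ)) ((t:ℕ):ℤ) := by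
        simp only [Finset.smul_sum]
        rw [Finset.sum_comm]
        exact Finset.sum_congr rfl fun i _ => Finset.sum_congr rfl fun t _ =>
          smul_comm _ _ _

end Part2

section Part2B
variable {N : ℕ}
local notation "Mat" => Matrix (Fin N) (Fin N) ℝ

lemma part2_backward (B M : ℕ) (b : ℕ → ℝ → Mat) (A : ℕ → ℤ → Mat)
    (hbA : ∀ (n : ℕ) (x : ℝ), 0 < x → b n x = ∑ i ∈ Finset.Icc (-(B:ℤ)) B, x^i • A n i) :
    ∃ c : ℤ → ℤ → Mat, (∀ n : ℤ, ((B+M:ℕ):ℤ) < |n| → c n = 0) ∧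
      ∀ (k : ℤ) (x : ℝ), 0 < x →
        ∑ n ∈ Finset.Icc (-((B+M:ℕ):ℤ)) ((B+M:ℕ):ℤ), x^(k+n) • c n k
          = ∑ p ∈ Finset.range (M+1), (descf k p * x ^ (k - (p:ℤ))) • b p x := by
  classical
  refine ⟨fun n k => ∑ p ∈ Finset.range (M+1), ∑ i ∈ Finset.Icc (-(B:ℤ)) B,
      if i - p = n then descf k p • A p i else 0, ?_, ?_⟩
  · intro n hn
    funext k
    refine Finset.sum_eq_zero fun p hp => Finset.sum_eq_zero fun i hi => ?_
    rw [if_neg]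
    simp only [Finset.mem_range] at hp
    simp only [Finset.mem_Icc] at hi
    intro hcon
    rw [← hcon] at hn
    rcases le_or_gt 0 (i - (p:ℤ)) with h | h
    · rw [abs_of_nonneg h] at hn; omega
    · rw [abs_of_neg h] at hn; omega
  · intro k x hx
    have hxne : x ≠ 0 := ne_of_gt hx
    calc ∑ n ∈ Finset.Icc (-((B+M:ℕ):ℤ)) ((B+M:ℕ):ℤ), x^(k+n) •
          ∑ p ∈ Finset.range (M+1), ∑ i ∈ Finset.Icc (-(B:ℤ)) B,
            (if i - p = n then descf k p • A p i else 0)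
        = ∑ p ∈ Finset.range (M+1), ∑ i ∈ Finset.Icc (-(B:ℤ)) B,
            ∑ n ∈ Finset.Icc (-((B+M:ℕ):ℤ)) ((B+M:ℕ):ℤ),
              (if i - p = n then x^(k+n) • descf k p • A p i else 0) := by
          have e1 : ∑ n ∈ Finset.Icc (-((B+M:ℕ):ℤ)) ((B+M:ℕ):ℤ), x^(k+n) •
              ∑ p ∈ Finset.range (M+1), ∑ i ∈ Finset.Icc (-(B:ℤ)) B,
                (if i - p = n then descf k p • A p i else 0)
              = ∑ n ∈ Finset.Icc (-((B+M:ℕ):ℤ)) ((B+M:ℕ):ℤ),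
                  ∑ p ∈ Finset.range (M+1), ∑ i ∈ Finset.Icc (-(B:ℤ)) B,
                    (if i - p = n then x^(k+n) • descf k p • A p i else 0) := by
            refine Finset.sum_congr rfl fun n _ => ?_
            rw [Finset.smul_sum]
            refine Finset.sum_congr rfl fun p _ => ?_
            rw [Finset.smul_sum]
            refine Finset.sum_congr rfl fun i _ => ?_
            rw [smul_ite, smul_zero]
          rw [e1, Finset.sum_comm]
          exact Finset.sum_congr rfl fun p _ => Finset.sum_comm
    _ = ∑ p ∈ Finset.range (M+1), ∑ i ∈ Finset.Icc (-(B:ℤ)) B,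
            x^(k+(i-(p:ℤ))) • descf k p • A p i := by
          refine Finset.sum_congr rfl fun p hp => Finset.sum_congr rfl fun i hi => ?_
          rw [Finset.sum_ite_eq (Finset.Icc (-((B+M:ℕ):ℤ)) ((B+M:ℕ):ℤ)) (i - (p:ℤ))
            (fun n => x^(k+n) • descf k p • A p i)]
          rw [if_pos]
          simp only [Finset.mem_range] at hp
          simp only [Finset.mem_Icc] at hi
          simp only [Finset.mem_Icc]
          push_cast
          omega
    _ = ∑ p ∈ Finset.range (M+1), (descf k p * x ^ (k - (p:ℤ))) •
            ∑ i ∈ Finset.Icc (-(B:ℤ)) B, x^i • A p i := by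
          refine Finset.sum_congr rfl fun p _ => ?_
          rw [Finset.smul_sum]
          refine Finset.sum_congr rfl fun i _ => ?_
          rw [smul_smul, smul_smul]
          congr 1
          rw [show k + (i - (p:ℤ)) = (k - (p:ℤ)) + i by ring, zpow_add₀ hxne]
          ring
    _ = ∑ p ∈ Finset.range (M+1), (descf k p * x ^ (k - (p:ℤ))) • b p x := by
          refine Finset.sum_congr rfl fun p _ => ?_
          rw [hbA p x hx]

end Part2B

lemma rAct_iter (j : ℕ) (k : ℤ) :
    (fun g x => deriv g x * x : (ℝ → ℝ) → (ℝ → ℝ))^[j] (fun y : ℝ => y ^ k)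
      = fun y : ℝ => (k : ℝ) ^ j * y ^ k := by
  induction j with
  | zero => funext y; simp
  | succ j ih =>
    rw [Function.iterate_succ_apply', ih]
    funext y
    show deriv (fun y : ℝ => (k:ℝ)^j * y ^ k) y * y = (k:ℝ)^(j+1) * y^k
    rw [deriv_const_mul_field, deriv_zpow]
    by_cases hy : y = 0
    · subst hy
      rw [mul_zero]
      by_cases hk : k = 0
      · subst hk; norm_num
      · rw [_root_.zero_zpow k hk, mul_zero]
    · rw [show (k:ℝ)^j * ((k:ℝ) * y ^ (k-1)) * y = (k:ℝ)^(j+1) * (y^(k-1) * y^(1:ℤ)) by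
        rw [zpow_one]; ring, ← zpow_add₀ hy]
      norm_num

-- polynomial coefficients are unique (via Vandermonde)
lemma poly_coeff_zero {N d : ℕ} (a : ℕ → Matrix (Fin N) (Fin N) ℝ)
    (h : ∀ k : ℤ, ∑ j ∈ Finset.range (d+1), (k:ℝ)^j • a j = 0) :
    ∀ j ∈ Finset.range (d+1), a j = 0 := by
  have hsys : ∀ t : Fin (d+1),
      ∑ jj : Fin (d+1), (Matrix.vandermonde (fun t : Fin (d+1) => ((t:ℕ):ℝ) + 1)) t jj
        • a (jj:ℕ) = 0 := by
    intro t
    have h0 := h ((t:ℕ) + 1 : ℤ)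
    rw [← Fin.sum_univ_eq_sum_range (fun j => ((((t:ℕ)+1 : ℤ)):ℝ)^j • a j) (d+1)] at h0
    calc ∑ jj : Fin (d+1), (Matrix.vandermonde (fun t : Fin (d+1) => ((t:ℕ):ℝ) + 1)) t jj • a (jj:ℕ)
        = ∑ jj : Fin (d+1), ((((t:ℕ)+1 : ℤ)):ℝ)^(jj:ℕ) • a (jj:ℕ) := by
          refine Finset.sum_congr rfl fun jj _ => ?_
          congr 1
          simp [Matrix.vandermonde]
      _ = 0 := h0
  have := solve_lin _ (vand_unit (d+1)) _ (fun _ => 0) hsys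
  intro j hj
  simp only [Finset.mem_range] at hj
  have := this ⟨j, hj⟩
  simpa using this

section Part3
variable (N ℓ m : ℕ)
local notation "Mat" => Matrix (Fin N) (Fin N) ℝ

noncomputable def Phi : (↥(Finset.Icc (-(ℓ:ℤ)) (ℓ:ℤ)) → Fin (2*m+1) → Mat) →ₗ[ℝ]
    (ℤ → ℤ → Mat) where
  toFun A := fun n k => if h : n ∈ Finset.Icc (-(ℓ:ℤ)) (ℓ:ℤ) then
      ∑ j : Fin (2*m+1), (k:ℝ)^(j:ℕ) • A ⟨n, h⟩ j else 0
  map_add' A B := by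
    funext n k
    show (if h : n ∈ Finset.Icc (-(ℓ:ℤ)) (ℓ:ℤ) then
        ∑ j : Fin (2*m+1), (k:ℝ)^(j:ℕ) • (A + B) ⟨n, h⟩ j else 0)
      = (if h : n ∈ Finset.Icc (-(ℓ:ℤ)) (ℓ:ℤ) then
        ∑ j : Fin (2*m+1), (k:ℝ)^(j:ℕ) • A ⟨n, h⟩ j else 0)
      + (if h : n ∈ Finset.Icc (-(ℓ:ℤ)) (ℓ:ℤ) then
        ∑ j : Fin (2*m+1), (k:ℝ)^(j:ℕ) • B ⟨n, h⟩ j else 0)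
    by_cases h : n ∈ Finset.Icc (-(ℓ:ℤ)) (ℓ:ℤ)
    · rw [dif_pos h, dif_pos h, dif_pos h, ← Finset.sum_add_distrib]
      refine Finset.sum_congr rfl fun j _ => ?_
      show (k:ℝ)^(j:ℕ) • (A ⟨n, h⟩ j + B ⟨n, h⟩ j) = _
      rw [smul_add]
    · rw [dif_neg h, dif_neg h, dif_neg h, add_zero]
  map_smul' r A := by
    funext n k
    show (if h : n ∈ Finset.Icc (-(ℓ:ℤ)) (ℓ:ℤ) then
        ∑ j : Fin (2*m+1), (k:ℝ)^(j:ℕ) • (r • A) ⟨n, h⟩ j else 0)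
      = r • (if h : n ∈ Finset.Icc (-(ℓ:ℤ)) (ℓ:ℤ) then
        ∑ j : Fin (2*m+1), (k:ℝ)^(j:ℕ) • A ⟨n, h⟩ j else 0)
    by_cases h : n ∈ Finset.Icc (-(ℓ:ℤ)) (ℓ:ℤ)
    · rw [dif_pos h, dif_pos h, Finset.smul_sum]
      refine Finset.sum_congr rfl fun j _ => ?_
      show (k:ℝ)^(j:ℕ) • (r • A ⟨n, h⟩ j) = _
      rw [smul_comm]
    · rw [dif_neg h, dif_neg h, smul_zero]

lemma Phi_apply_pos (A : ↥(Finset.Icc (-(ℓ:ℤ)) (ℓ:ℤ)) → Fin (2*m+1) → Mat)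
    {n : ℤ} (h : n ∈ Finset.Icc (-(ℓ:ℤ)) (ℓ:ℤ)) (k : ℤ) :
    (Phi N ℓ m) A n k = ∑ j : Fin (2*m+1), (k:ℝ)^(j:ℕ) • A ⟨n, h⟩ j := by
  show (if h : n ∈ Finset.Icc (-(ℓ:ℤ)) (ℓ:ℤ) then
      ∑ j : Fin (2*m+1), (k:ℝ)^(j:ℕ) • A ⟨n, h⟩ j else 0) = _
  rw [dif_pos h]

lemma Phi_apply_neg (A : ↥(Finset.Icc (-(ℓ:ℤ)) (ℓ:ℤ)) → Fin (2*m+1) → Mat)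
    {n : ℤ} (h : n ∉ Finset.Icc (-(ℓ:ℤ)) (ℓ:ℤ)) (k : ℤ) :
    (Phi N ℓ m) A n k = 0 := by
  show (if h : n ∈ Finset.Icc (-(ℓ:ℤ)) (ℓ:ℤ) then
      ∑ j : Fin (2*m+1), (k:ℝ)^(j:ℕ) • A ⟨n, h⟩ j else 0) = _
  rw [dif_neg h]

lemma abs_of_not_mem {ℓ : ℕ} {n : ℤ} (h : n ∉ Finset.Icc (-(ℓ:ℤ)) (ℓ:ℤ)) : (ℓ:ℤ) < |n| := by
  simp only [Finset.mem_Icc, not_and_or, not_le] at h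
  rcases h with h | h
  · rw [abs_of_neg (by omega)]; omega
  · rw [abs_of_pos (by omega)]; omega

lemma mem_of_abs {ℓ : ℕ} {n : ℤ} (h : ¬ (ℓ:ℤ) < |n|) : n ∈ Finset.Icc (-(ℓ:ℤ)) (ℓ:ℤ) := by
  rcases abs_le.1 (not_lt.1 h) with ⟨h1, h2⟩
  exact Finset.mem_Icc.2 ⟨h1, h2⟩

lemma Phi_inj : Function.Injective (Phi N ℓ m) := by
  rw [injective_iff_map_eq_zero]
  intro A hA
  funext np j
  obtain ⟨n, hn⟩ := np
  have h1 : ∀ k : ℤ, ∑ jj : Fin (2*m+1), (k:ℝ)^(jj:ℕ) • A ⟨n, hn⟩ jj = 0 := by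
    intro k
    have h0 := congrFun (congrFun hA n) k
    rw [Phi_apply_pos N ℓ m A hn k] at h0
    exact h0
  set a : ℕ → Mat := fun j => if hj : j < 2*m+1 then A ⟨n, hn⟩ ⟨j, hj⟩ else 0 with ha
  have h2 : ∀ k : ℤ, ∑ j ∈ Finset.range (2*m+1), (k:ℝ)^j • a j = 0 := by
    intro k
    rw [← Fin.sum_univ_eq_sum_range (fun j => (k:ℝ)^j • a j) (2*m+1), ← h1 k]
    refine Finset.sum_congr rfl fun jj _ => ?_
    congr 1
    show (if hj : (jj:ℕ) < 2*m+1 then A ⟨n, hn⟩ ⟨(jj:ℕ), hj⟩ else 0) = A ⟨n, hn⟩ jj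
    rw [dif_pos jj.isLt]
  have h3 := poly_coeff_zero a h2 (j:ℕ) (Finset.mem_range.2 j.isLt)
  have h4 : a (j:ℕ) = A ⟨n, hn⟩ j := by
    show (if hj : (j:ℕ) < 2*m+1 then A ⟨n, hn⟩ ⟨(j:ℕ), hj⟩ else 0) = _
    rw [dif_pos j.isLt]
  rw [← h4, h3]
  rfl

lemma part3_main :
    ∃ S : Submodule ℝ (ℤ → ℤ → Mat),
      (S : Set (ℤ → ℤ → Mat)) =
        {c | (∀ n : ℤ, (ℓ : ℤ) < |n| → c n = 0) ∧
          ∃ b : ℕ → ℝ → Mat,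
            ∀ (k : ℤ) (x : ℝ), 0 < x →
              (∑ᶠ n : ℤ, x ^ (k + n) • c n k) =
                ∑ n ∈ Finset.range (2 * m + 1),
                  iteratedDeriv n (fun y : ℝ => y ^ k) x • b n x} ∧
      Module.rank ℝ S = ((2 * ℓ + 1) * (2 * m + 1) * N ^ 2 : ℕ) := by
  classical
  refine ⟨LinearMap.range (Phi N ℓ m), ?_, ?_⟩
  · ext c
    simp only [SetLike.mem_coe, LinearMap.mem_range, Set.mem_setOf_eq]
    constructor
    · rintro ⟨A, rfl⟩
      have hband : ∀ n : ℤ, (ℓ:ℤ) < |n| → (Phi N ℓ m) A n = 0 := by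
        intro n hn
        funext k
        exact Phi_apply_neg N ℓ m A (fun hmem => absurd hn (not_lt.2 (abs_le.2
          (Finset.mem_Icc.1 hmem)))) k
      refine ⟨hband, ?_⟩
      have hc : ∀ n k, (Phi N ℓ m) A n k = ∑ j ∈ Finset.range (2*m+1), (k:ℝ)^j •
          (fun n j => if h : n ∈ Finset.Icc (-(ℓ:ℤ)) (ℓ:ℤ) ∧ j < 2*m+1
            then A ⟨n, h.1⟩ ⟨j, h.2⟩ else 0) n j := by
        intro n k
        by_cases h : n ∈ Finset.Icc (-(ℓ:ℤ)) (ℓ:ℤ)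
        · rw [Phi_apply_pos N ℓ m A h k,
            ← Fin.sum_univ_eq_sum_range (fun j => (k:ℝ)^j •
              (fun n j => if h : n ∈ Finset.Icc (-(ℓ:ℤ)) (ℓ:ℤ) ∧ j < 2*m+1
                then A ⟨n, h.1⟩ ⟨j, h.2⟩ else 0) n j) (2*m+1)]
          refine Finset.sum_congr rfl fun jj _ => ?_
          congr 1
          show A ⟨n, h⟩ jj = (if hh : n ∈ Finset.Icc (-(ℓ:ℤ)) (ℓ:ℤ) ∧ (jj:ℕ) < 2*m+1
            then A ⟨n, hh.1⟩ ⟨(jj:ℕ), hh.2⟩ else 0)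
          rw [dif_pos ⟨h, jj.isLt⟩]
        · rw [Phi_apply_neg N ℓ m A h k]
          refine (Finset.sum_eq_zero fun j hj => ?_).symm
          have : (if hh : n ∈ Finset.Icc (-(ℓ:ℤ)) (ℓ:ℤ) ∧ j < 2*m+1
              then A ⟨n, hh.1⟩ ⟨j, hh.2⟩ else 0) = 0 :=
            dif_neg (fun hh => h hh.1)
          show (k:ℝ)^j • (if hh : n ∈ Finset.Icc (-(ℓ:ℤ)) (ℓ:ℤ) ∧ j < 2*m+1
            then A ⟨n, hh.1⟩ ⟨j, hh.2⟩ else 0) = 0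
          rw [this, smul_zero]
      obtain ⟨b, hb⟩ := construct ℓ (2*m) _ ((Phi N ℓ m) A) hc
      refine ⟨b, fun k x hx => ?_⟩
      rw [finsum_band ℓ ((Phi N ℓ m) A) hband k x, diff_side (2*m) b k x hx]
      exact hb k x hx
    · rintro ⟨hband, b, hb⟩
      have heq : ∀ (k : ℤ) (x : ℝ), 0 < x →
          ∑ n ∈ Finset.Icc (-(ℓ:ℤ)) ℓ, x^(k+n) • c n k
            = ∑ p ∈ Finset.range (2*m+1), (descf k p * x ^ (k - (p:ℤ))) • b p x := by
        intro k x hx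
        rw [← finsum_band ℓ c hband k x, ← diff_side (2*m) b k x hx]
        exact hb k x hx
      obtain ⟨A, hAvan, hArep⟩ := forward_core ℓ (2*m) c b hband heq
      refine ⟨fun np j => A np.val (j:ℕ), ?_⟩
      funext n k
      by_cases h : n ∈ Finset.Icc (-(ℓ:ℤ)) (ℓ:ℤ)
      · rw [Phi_apply_pos N ℓ m _ h k, hArep n k,
          ← Fin.sum_univ_eq_sum_range (fun j => (k:ℝ)^j • A n j) (2*m+1)]
      · rw [Phi_apply_neg N ℓ m _ h k, hband n (abs_of_not_mem h)]
        rfl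
  · rw [← (LinearEquiv.ofInjective (Phi N ℓ m) (Phi_inj N ℓ m)).rank_eq]
    have hfd : Module.rank ℝ (↥(Finset.Icc (-(ℓ:ℤ)) (ℓ:ℤ)) → Fin (2*m+1) → Mat)
        = (Module.finrank ℝ (↥(Finset.Icc (-(ℓ:ℤ)) (ℓ:ℤ)) → Fin (2*m+1) → Mat) : Cardinal) :=
      (Module.finrank_eq_rank ℝ _).symm
    rw [hfd]
    congr 1
    rw [Module.finrank_pi_fintype]
    simp only [Module.finrank_pi_fintype, Module.finrank_matrix, Module.finrank_self,
      Finset.sum_const, smul_eq_mul, Finset.card_univ, Fintype.card_fin, mul_one]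
    rw [Fintype.card_coe, Int.card_Icc]
    have hcard : ((ℓ:ℤ) + 1 - -(ℓ:ℤ)).toNat = 2 * ℓ + 1 := by omega
    rw [hcard]
    ring

end Part3

/-- for `Ψ(k,x) = x^k I_N` on `ℤ × (0,∞)`:
(1) the left Fourier algebra is `F_k(Ψ) = M_N(ℝ)[k, S_k^{±1}]`: a band-finite
shift operator with coefficients `c_n(k)` intertwines with some differential
operator `∑ ∂^n b_n(x)` through `Ψ` iff all its coefficients are matrix
polynomials in `k`;
(2) the right Fourier algebra is `F_x(Ψ) = M_N(ℝ)[∂_x, x^{±1}]`: a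
differential operator `∑_{n≤M} ∂^n b_n` is intertwined with some band-finite
shift operator iff its coefficients are matrix Laurent polynomials in `x`;
(3) `F_k^{2ℓ,2m}(Ψ)` (bandwidth `≤ 2ℓ`, co-order `≤ 2m`) is a submodule of
dimension `(2ℓ+1)(2m+1)N²`;
(4) the generalized Fourier map is determined by `b_Ψ(k^j S_k^i) = (∂_x x)^j x^i`
(together with `b_Ψ(A) = A` on matrices). -/
theorem stmt13 (N ℓ m : ℕ) :
    (∀ c : ℤ → ℤ → Matrix (Fin N) (Fin N) ℝ,
      ((∃ Bd : ℕ, ∀ n : ℤ, (Bd : ℤ) < |n| → c n = 0) ∧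
        ∃ (M : ℕ) (b : ℕ → ℝ → Matrix (Fin N) (Fin N) ℝ),
          ∀ (k : ℤ) (x : ℝ), 0 < x →
            (∑ᶠ n : ℤ, x ^ (k + n) • c n k) =
              ∑ n ∈ Finset.range (M + 1),
                iteratedDeriv n (fun y : ℝ => y ^ k) x • b n x)
      ↔ ∃ (Bd m' : ℕ) (A : ℤ → ℕ → Matrix (Fin N) (Fin N) ℝ),
          (∀ n : ℤ, (Bd : ℤ) < |n| → ∀ j, A n j = 0) ∧
          ∀ (n : ℤ) (k : ℤ),
            c n k = ∑ j ∈ Finset.range (m' + 1), ((k : ℝ)) ^ j • A n j)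
    ∧
    (∀ (b : ℕ → ℝ → Matrix (Fin N) (Fin N) ℝ) (M : ℕ), (∀ n, M < n → b n = 0) →
      ((∃ c : ℤ → ℤ → Matrix (Fin N) (Fin N) ℝ,
          (∃ Bd : ℕ, ∀ n : ℤ, (Bd : ℤ) < |n| → c n = 0) ∧
          ∀ (k : ℤ) (x : ℝ), 0 < x →
            (∑ᶠ n : ℤ, x ^ (k + n) • c n k) =
              ∑ n ∈ Finset.range (M + 1),
                iteratedDeriv n (fun y : ℝ => y ^ k) x • b n x)
        ↔ ∃ (Bd : ℕ) (A : ℕ → ℤ → Matrix (Fin N) (Fin N) ℝ),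
            ∀ (n : ℕ) (x : ℝ), 0 < x →
              b n x = ∑ i ∈ Finset.Icc (-(Bd : ℤ)) (Bd : ℤ), x ^ i • A n i))
    ∧
    (∃ S : Submodule ℝ (ℤ → ℤ → Matrix (Fin N) (Fin N) ℝ),
      (S : Set (ℤ → ℤ → Matrix (Fin N) (Fin N) ℝ)) =
        {c | (∀ n : ℤ, (ℓ : ℤ) < |n| → c n = 0) ∧
          ∃ b : ℕ → ℝ → Matrix (Fin N) (Fin N) ℝ,
            ∀ (k : ℤ) (x : ℝ), 0 < x →
              (∑ᶠ n : ℤ, x ^ (k + n) • c n k) =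
                ∑ n ∈ Finset.range (2 * m + 1),
                  iteratedDeriv n (fun y : ℝ => y ^ k) x • b n x} ∧
      Module.rank ℝ S = ((2 * ℓ + 1) * (2 * m + 1) * N ^ 2 : ℕ))
    ∧
    (∀ (j : ℕ) (i k : ℤ) (x : ℝ), 0 < x →
      rAct^[j] (fun y : ℝ => y ^ k) x * x ^ i = (k : ℝ) ^ j * x ^ (k + i)) := by
  refine ⟨?_, ?_, part3_main N ℓ m, ?_⟩
  · -- Part 1
    intro c
    constructor
    · rintro ⟨⟨Bd, hband⟩, M, b, hbeq⟩
      have heq : ∀ (k : ℤ) (x : ℝ), 0 < x →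
          ∑ n ∈ Finset.Icc (-(Bd:ℤ)) Bd, x^(k+n) • c n k
            = ∑ p ∈ Finset.range (M+1), (descf k p * x ^ (k - (p:ℤ))) • b p x := by
        intro k x hx
        rw [← finsum_band Bd c hband k x, ← diff_side M b k x hx]
        exact hbeq k x hx
      obtain ⟨A, hvan, hrep⟩ := forward_core Bd M c b hband heq
      exact ⟨Bd, M, A, hvan, hrep⟩
    · rintro ⟨Bd, m', A, hvan, hrep⟩
      have hband : ∀ n : ℤ, (Bd:ℤ) < |n| → c n = 0 := by
        intro n hn
        funext k
        rw [hrep n k]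
        refine Finset.sum_eq_zero fun j _ => ?_
        rw [hvan n hn j, smul_zero]
      obtain ⟨b, hb⟩ := construct Bd m' A c hrep
      refine ⟨⟨Bd, hband⟩, m', b, fun k x hx => ?_⟩
      rw [finsum_band Bd c hband k x, diff_side m' b k x hx]
      exact hb k x hx
  · -- Part 2
    intro b M hb
    constructor
    · rintro ⟨c, ⟨Bd, hband⟩, heq0⟩
      have heq : ∀ (k : ℤ) (x : ℝ), 0 < x →
          ∑ n ∈ Finset.Icc (-(Bd:ℤ)) Bd, x^(k+n) • c n k
            = ∑ p ∈ Finset.range (M+1), (descf k p * x ^ (k - (p:ℤ))) • b p x := by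
        intro k x hx
        rw [← finsum_band Bd c hband k x, ← diff_side M b k x hx]
        exact heq0 k x hx
      obtain ⟨A, hA⟩ := part2_forward Bd M c b hband hb heq
      exact ⟨Bd + M, A, hA⟩
    · rintro ⟨Bd, A, hbA⟩
      obtain ⟨c, hband, heq⟩ := part2_backward Bd M b A hbA
      refine ⟨c, ⟨Bd + M, hband⟩, fun k x hx => ?_⟩
      rw [finsum_band (Bd + M) c hband k x, diff_side M b k x hx]
      exact heq k x hx
  · -- Part 4
    intro j i k x hx
    have h : rAct^[j] (fun y : ℝ => y ^ k) x = (k:ℝ)^j * x ^ k := by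
      have := congrFun (rAct_iter j k) x
      exact this
    rw [h, mul_assoc, ← zpow_add₀ (ne_of_gt hx)]
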